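/- Let V be a real topological vector space, let q : V → ℝ be a continuous weak Minkowski norm, let P := { p ∈ V' | ⟨p,x⟩ ≤ q(x) for all x ∈ V }, and let cl(ext P) denote the weak* closure of the set of extreme points of P. If f : V → ℝ is nonexpansive with respect to q, then for every x ∈ V, f(x) = min_{y ∈ V} max_{p ∈ cl(ext P)} ( ⟨p,x−y⟩ + f(y) ), i.e., the minimax representation of f remains valid when the maximum over P is restricted to points of cl(ext P). -/

import Mathlib

open Set

/-- If `f : V → ℝ` is nonexpansive with respect to a continuous weak Minkowski
norm `q`, then for every `x`, `f x = min_{y} max_{p ∈ cl(ext P)} (p (x - y) + f y)`, where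
`P` is the set of continuous linear forms dominated by `q` and `cl(ext P)` is the weak*
closure of its set of extreme points; the inner maximum is attained for each `y` and the
outer minimum over `y` is attained. -/
theorem stmt4 {V : Type*} [AddCommGroup V] [Module ℝ V] [TopologicalSpace V]
    [IsTopologicalAddGroup V] [ContinuousSMul ℝ V]
    (q : V → ℝ) (hq_convex : ConvexOn ℝ Set.univ q)
    (hq_hom : ∀ (c : ℝ), 0 ≤ c → ∀ x : V, q (c • x) = c * q x)
    (hq_cont : Continuous q)
    (P : Set (WeakDual ℝ V)) (hP : P = {p : WeakDual ℝ V | ∀ x : V, p x ≤ q x})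
    (f : V → ℝ) (hf : ∀ x y : V, f x - f y ≤ q (x - y)) :
    ∀ x : V,
      (∀ y : V, ∃ r : ℝ,
        IsGreatest {s : ℝ | ∃ p ∈ closure (Set.extremePoints ℝ P), s = p (x - y) + f y} r) ∧
      IsLeast {r : ℝ | ∃ y : V,
        IsGreatest {s : ℝ | ∃ p ∈ closure (Set.extremePoints ℝ P), s = p (x - y) + f y} r}
        (f x) := by
  classical
  have hq0 : q 0 = 0 := by simpa using hq_hom 0 le_rfl 0
  have hq_add : ∀ a b : V, q (a + b) ≤ q a + q b := by
    intro a b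
    have hconv := hq_convex.2 (Set.mem_univ a) (Set.mem_univ b)
      (by norm_num : (0:ℝ) ≤ 1/2) (by norm_num : (0:ℝ) ≤ 1/2) (by norm_num : (1/2:ℝ)+1/2 = 1)
    simp only [smul_eq_mul] at hconv
    have hh := hq_hom (1/2) (by norm_num) (a + b)
    rw [smul_add] at hh
    linarith
  have hq_sum_nonneg : ∀ a : V, 0 ≤ q a + q (-a) := by
    intro a
    have := hq_add a (-a)
    simp only [add_neg_cancel, hq0] at this
    linarith
  -- any linear functional dominated by q is continuous
  have hcont_of_le : ∀ g : V →ₗ[ℝ] ℝ, (∀ v, g v ≤ q v) → Continuous g := by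
    intro g hg
    refine continuous_of_continuousAt_zero g ?_
    rw [ContinuousAt, map_zero]
    have hup : Filter.Tendsto q (nhds 0) (nhds 0) := by
      simpa [hq0] using hq_cont.tendsto (0 : V)
    have hlo : Filter.Tendsto (fun v : V => -q (-v)) (nhds 0) (nhds 0) := by
      have h0 : Filter.Tendsto (fun v : V => -v) (nhds 0) (nhds (0 : V)) := by
        simpa using continuous_neg.tendsto (0 : V)
      have hneg : Filter.Tendsto (fun v : V => q (-v)) (nhds 0) (nhds 0) := hup.comp h0
      simpa using hneg.neg
    refine tendsto_of_tendsto_of_tendsto_of_le_of_le hlo hup ?_ ?_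
    · intro v
      have h := hg (-v)
      rw [map_neg] at h
      show -q (-v) ≤ g v
      linarith
    · exact fun v => hg v
  -- Hahn-Banach extension step
  have hext : ∀ z : V, z ≠ 0 → ∃ g : V →ₗ[ℝ] ℝ, g z = q z ∧ ∀ v, g v ≤ q v := by
    intro z hz
    have hdom : ∀ v : (LinearPMap.mkSpanSingleton (K := ℝ) (L := ℝ) (σ := RingHom.id ℝ) z (q z) hz).domain,
        LinearPMap.mkSpanSingleton (K := ℝ) (L := ℝ) (σ := RingHom.id ℝ) z (q z) hz v ≤ q v := by
      rintro ⟨v, hv⟩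
      rw [LinearPMap.domain_mkSpanSingleton, Submodule.mem_span_singleton] at hv
      obtain ⟨c, rfl⟩ := hv
      show LinearPMap.mkSpanSingleton (K := ℝ) (L := ℝ) (σ := RingHom.id ℝ) z (q z) hz ⟨c • z, _⟩ ≤ q (c • z)
      rw [LinearPMap.mkSpanSingleton'_apply, RingHom.id_apply]
      rcases le_or_gt 0 c with hc | hc
      · rw [smul_eq_mul, hq_hom c hc]
      · have h1 : q (c • z) = (-c) * q (-z) := by
          have h := hq_hom (-c) (by linarith) (-z)
          rw [smul_neg, neg_smul, neg_neg] at h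
          exact h
        rw [smul_eq_mul, h1]
        nlinarith [hq_sum_nonneg z]
    obtain ⟨g, hg1, hg2⟩ := exists_extension_of_le_sublinear
      (LinearPMap.mkSpanSingleton (K := ℝ) (L := ℝ) (σ := RingHom.id ℝ) z (q z) hz) q
      (fun c hc v => hq_hom c hc.le v) hq_add hdom
    refine ⟨g, ?_, hg2⟩
    have := hg1 ⟨z, Submodule.mem_span_singleton_self z⟩
    rw [this, LinearPMap.mkSpanSingleton_apply]
  have hahn : ∀ z : V, ∃ p : WeakDual ℝ V, (∀ v, p v ≤ q v) ∧ p z = q z := by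
    intro z
    by_cases hz : z = 0
    · subst hz
      by_cases hV : ∃ w : V, w ≠ 0
      · obtain ⟨w, hw⟩ := hV
        obtain ⟨g, _, hg2⟩ := hext w hw
        refine ⟨(⟨g, hcont_of_le g hg2⟩ : V →L[ℝ] ℝ), hg2, ?_⟩
        show g 0 = q 0
        rw [map_zero, hq0]
      · push_neg at hV
        refine ⟨0, fun v => ?_, by simp [hq0]⟩
        rw [hV v]
        simp [hq0]
    · obtain ⟨g, hg1, hg2⟩ := hext z hz
      exact ⟨(⟨g, hcont_of_le g hg2⟩ : V →L[ℝ] ℝ), hg2, hg1⟩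
  -- properties of P
  have hPconv : Convex ℝ P := by
    rw [hP]
    intro p hp r hr a b ha hb hab
    simp only [Set.mem_setOf_eq] at hp hr ⊢
    intro v
    have happ : (a • p + b • r) v = a * p v + b * r v := by
      rfl
    rw [happ]
    calc a * p v + b * r v ≤ a * q v + b * q v := by
          gcongr <;> [exact hp v; exact hr v]
      _ = q v := by rw [← add_mul, hab, one_mul]
  have hPclosed : IsClosed P := by
    rw [hP]
    have : {p : WeakDual ℝ V | ∀ v, p v ≤ q v} = ⋂ v, {p : WeakDual ℝ V | p v ≤ q v} := by
      ext p; simp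
    rw [this]
    exact isClosed_iInter fun v => isClosed_le (WeakDual.eval_continuous v) continuous_const
  have hPcomp : IsCompact P := by
    have hinj : Function.Injective (topDualPairing ℝ V) := fun p r h =>
      ContinuousLinearMap.coe_injective h
    have he := WeakBilin.isEmbedding (B := topDualPairing ℝ V) hinj
    set S : Set (V → ℝ) := {g | (∀ a b, g (a + b) = g a + g b) ∧
      (∀ (c : ℝ) a, g (c • a) = c * g a) ∧ ∀ v, g v ≤ q v} with hS
    have himg : (fun (p : WeakDual ℝ V) (v : V) => topDualPairing ℝ V p v) '' P = S := by
      apply subset_antisymm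
      · rintro _ ⟨p, hp, rfl⟩
        rw [hP] at hp
        exact ⟨fun a b => map_add p a b, fun c a => by
          simp [topDualPairing_apply, map_smul, smul_eq_mul], hp⟩
      · rintro g ⟨h1, h2, h3⟩
        let gl : V →ₗ[ℝ] ℝ :=
          { toFun := g
            map_add' := h1
            map_smul' := fun c a => by
              simp only [RingHom.id_apply, smul_eq_mul]; exact h2 c a }
        exact ⟨(⟨gl, hcont_of_le gl h3⟩ : V →L[ℝ] ℝ), by rw [hP]; exact h3, rfl⟩
    have hSsub : S ⊆ Set.pi Set.univ (fun v => Set.Icc (-q (-v)) (q v)) := by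
      rintro g ⟨h1, h2, h3⟩ v _
      refine ⟨?_, h3 v⟩
      have hneg : g (-v) = -g v := by
        have := h2 (-1) v
        simpa using this
      have := h3 (-v)
      rw [hneg] at this
      linarith
    have hSclosed : IsClosed S := by
      have : S = (⋂ (a) (b), {g : V → ℝ | g (a + b) = g a + g b}) ∩
          ((⋂ (c : ℝ) (a), {g : V → ℝ | g (c • a) = c * g a}) ∩
            (⋂ v, {g : V → ℝ | g v ≤ q v})) := by
        ext g
        simp only [hS, Set.mem_setOf_eq, Set.mem_inter_iff, Set.mem_iInter]
      rw [this]
      refine IsClosed.inter ?_ (IsClosed.inter ?_ ?_)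
      · exact isClosed_iInter fun a => isClosed_iInter fun b =>
          isClosed_eq (continuous_apply (a + b)) ((continuous_apply a).add (continuous_apply b))
      · exact isClosed_iInter fun c => isClosed_iInter fun a =>
          isClosed_eq (continuous_apply (c • a)) (continuous_const.mul (continuous_apply a))
      · exact isClosed_iInter fun v => isClosed_le (continuous_apply v) continuous_const
    have hScomp : IsCompact S :=
      (isCompact_univ_pi fun v => isCompact_Icc).of_isClosed_subset hSclosed hSsub
    exact he.isCompact_iff.mpr (himg ▸ hScomp)
  haveI : LocallyConvexSpace ℝ (WeakDual ℝ V) := WeakBilin.locallyConvexSpace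
  have hKM : closure (convexHull ℝ (P.extremePoints ℝ)) = P :=
    closure_convexHull_extremePoints hPcomp hPconv
  obtain ⟨p₀, hp₀, _⟩ := hahn 0
  have hp₀P : p₀ ∈ P := by rw [hP]; exact hp₀
  have hExt : (P.extremePoints ℝ).Nonempty := hPcomp.extremePoints_nonempty ⟨p₀, hp₀P⟩
  intro x
  have hEP : closure (Set.extremePoints ℝ P) ⊆ P :=
    closure_minimal (extremePoints_subset) hPclosed
  have hEcomp : IsCompact (closure (Set.extremePoints ℝ P)) :=
    hPcomp.of_isClosed_subset isClosed_closure hEP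
  have hEne : (closure (Set.extremePoints ℝ P)).Nonempty := hExt.closure
  have hmax : ∀ y : V,
      IsGreatest {s : ℝ | ∃ p ∈ closure (Set.extremePoints ℝ P), s = p (x - y) + f y}
        (q (x - y) + f y) := by
    intro y
    set z := x - y with hz
    obtain ⟨m, hmE, hm⟩ := hEcomp.exists_isMaxOn hEne
      ((WeakDual.eval_continuous z).continuousOn)
    have hm' : ∀ p ∈ closure (Set.extremePoints ℝ P), p z ≤ m z := fun p hp => hm hp
    have hub : ∀ p ∈ P, p z ≤ m z := by
      intro p hp
      have hH : P ⊆ {p : WeakDual ℝ V | p z ≤ m z} := by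
        rw [← hKM]
        refine closure_minimal (convexHull_min ?_ ?_) ?_
        · exact fun p hp => hm' p (subset_closure hp)
        · exact convex_halfSpace_le ⟨fun a b => rfl, fun c a => rfl⟩ _
        · exact isClosed_le (WeakDual.eval_continuous z) continuous_const
      exact hH hp
    have hmz : m z = q z := by
      obtain ⟨p₁, hp₁, hp₁z⟩ := hahn z
      have h1 : m z ≤ q z := by
        have := hEP hmE
        rw [hP] at this
        exact this z
      have h2 : q z ≤ m z := by
        rw [← hp₁z]
        exact hub p₁ (by rw [hP]; exact hp₁)
      linarith
    constructor
    · exact ⟨m, hmE, by rw [hmz]⟩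
    · rintro s ⟨p, hpE, rfl⟩
      have hpP := hEP hpE
      rw [hP] at hpP
      have := hpP z
      linarith
  refine ⟨fun y => ⟨_, hmax y⟩, ?_, ?_⟩
  · exact ⟨x, by simpa [sub_self, hq0] using hmax x⟩
  · rintro r ⟨y, hg⟩
    have hr : r = q (x - y) + f y := hg.unique (hmax y)
    have h := hf x y
    linarith
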